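/- Let ℓ be a positive integer, let S_{2,ℓ} be the double star graph, and let u₁ and u₂ be the two vertices of degree one adjacent to the center u of degree three. Then there is pretty good state transfer from u₁ to u₂ in S_{2,ℓ} if and only if ℓ ≠ 2. -/

import Mathlib

open Matrix

noncomputable section

/-- Vertex set of the double star `S_{k,ℓ}`: `Sum.inl 0` is the centre `u`,
`Sum.inl 1` the centre `v`, `Sum.inr (Sum.inl i)` are the pendant neighbours of `u`,
and `Sum.inr (Sum.inr j)` are the pendant neighbours of `v`. -/
abbrev DSVertex (k l : ℕ) := (Fin 2) ⊕ (Fin k ⊕ Fin l)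

/-- The double star graph `S_{k,ℓ}`: the centres `u = Sum.inl 0` and `v = Sum.inl 1` are
adjacent, `u` is adjacent to its `k` pendant vertices and `v` to its `ℓ` pendant vertices. -/
def doubleStar (k l : ℕ) : SimpleGraph (DSVertex k l) :=
  SimpleGraph.fromRel (fun a b =>
    (a = Sum.inl 0 ∧ b = Sum.inl 1) ∨
    (∃ i : Fin k, a = Sum.inl 0 ∧ b = Sum.inr (Sum.inl i)) ∨
    (∃ j : Fin l, a = Sum.inl 1 ∧ b = Sum.inr (Sum.inr j)))

instance (k l : ℕ) : DecidableRel (doubleStar k l).Adj := fun _ _ => Classical.dec _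

/-- The continuous quantum walk `U(t) = exp(itA)`. -/
def qWalk {n : Type*} [Fintype n] [DecidableEq n] (A : Matrix n n ℂ) (t : ℝ) :
    Matrix n n ℂ :=
  NormedSpace.exp ((Complex.I * (t : ℂ)) • A)

/-- Pretty good state transfer from `a` to `b` for the quantum walk of `A`: there is `γ`
with `|γ| = 1` such that `U(t) e_a` gets arbitrarily close to `γ e_b`. -/
def IsPGST {n : Type*} [Fintype n] [DecidableEq n] (A : Matrix n n ℂ) (a b : n) : Prop :=
  ∃ γ : ℂ, ‖γ‖ = 1 ∧ ∀ ε : ℝ, 0 < ε → ∃ t : ℝ,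
    ‖(qWalk A t).mulVec (Pi.single a 1) - γ • (Pi.single b 1 : n → ℂ)‖ < ε

/- ### Auxiliary material -/

lemma exp_mulVec_eigen {n : Type*} [Fintype n] [DecidableEq n]
    (M : Matrix n n ℂ) (c : ℂ) (v : n → ℂ) (h : M.mulVec v = c • v) :
    (NormedSpace.exp M).mulVec v = Complex.exp c • v := by
  letI : SeminormedRing (Matrix n n ℂ) := Matrix.linftyOpSemiNormedRing
  letI : NormedRing (Matrix n n ℂ) := Matrix.linftyOpNormedRing
  letI : NormedAlgebra ℂ (Matrix n n ℂ) := Matrix.linftyOpNormedAlgebra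
  have hpow : ∀ k : ℕ, (M ^ k).mulVec v = c ^ k • v := by
    intro k
    induction k with
    | zero => simp
    | succ k ih =>
        rw [pow_succ, ← Matrix.mulVec_mulVec, h, Matrix.mulVec_smul, ih, smul_smul, ← pow_succ']
  let L : Matrix n n ℂ →ₗ[ℂ] (n → ℂ) :=
    { toFun := fun A => A.mulVec v
      map_add' := fun A B => Matrix.add_mulVec A B v
      map_smul' := fun c A => (Matrix.smul_mulVec c A v) }
  have hL : Continuous L := LinearMap.continuous_of_finiteDimensional L
  let L' : Matrix n n ℂ →L[ℂ] (n → ℂ) := ⟨L, hL⟩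
  have : (NormedSpace.exp M).mulVec v = L' (NormedSpace.exp M) := rfl
  rw [this, NormedSpace.exp_eq_tsum (𝕂 := ℂ), ContinuousLinearMap.map_tsum L'
    (NormedSpace.expSeries_summable' (𝕂 := ℂ) M)]
  have : ∀ k : ℕ, L' ((k.factorial⁻¹ : ℂ) • M ^ k) = ((k.factorial⁻¹ : ℂ) * c ^ k) • v := by
    intro k
    show ((k.factorial⁻¹ : ℂ) • M ^ k).mulVec v = _
    rw [Matrix.smul_mulVec, hpow, smul_smul]
  simp_rw [this]
  have hsum : Summable fun k : ℕ => ((k.factorial⁻¹ : ℂ) * c ^ k) := by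
    simpa [smul_eq_mul] using NormedSpace.expSeries_summable' (𝕂 := ℂ) c
  rw [hsum.tsum_smul_const]
  congr 1
  rw [Complex.exp_eq_exp_ℂ, NormedSpace.exp_eq_tsum (𝕂 := ℂ)]
  simp [smul_eq_mul]

lemma qWalk_eigen {n : Type*} [Fintype n] [DecidableEq n]
    (M : Matrix n n ℂ) (c : ℂ) (v : n → ℂ) (h : M.mulVec v = c • v) (t : ℝ) :
    (qWalk M t).mulVec v = Complex.exp (Complex.I * t * c) • v := by
  have h2 : ((Complex.I * (t : ℂ)) • M).mulVec v = (Complex.I * t * c) • v := by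
    rw [Matrix.smul_mulVec, h, smul_smul]
  exact exp_mulVec_eigen _ _ _ h2

section adj
variable {k l : ℕ}

lemma adj_ll (a b : Fin 2) :
    (doubleStar k l).Adj (Sum.inl a) (Sum.inl b) ↔ (a = 0 ∧ b = 1) ∨ (a = 1 ∧ b = 0) := by
  simp only [doubleStar, SimpleGraph.fromRel_adj, ne_eq, Sum.inl.injEq, Sum.inr.injEq]
  constructor
  · rintro ⟨hne, h | h | h⟩ <;> simp_all
  · rintro (⟨rfl, rfl⟩ | ⟨rfl, rfl⟩) <;> simp

lemma adj_lu (a : Fin 2) (i : Fin k) :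
    (doubleStar k l).Adj (Sum.inl a) (Sum.inr (Sum.inl i)) ↔ a = 0 := by
  simp only [doubleStar, SimpleGraph.fromRel_adj, ne_eq, Sum.inl.injEq, Sum.inr.injEq]
  constructor
  · rintro ⟨hne, h | h | h⟩ <;> simp_all
  · rintro rfl; simp

lemma adj_lv (a : Fin 2) (j : Fin l) :
    (doubleStar k l).Adj (Sum.inl a) (Sum.inr (Sum.inr j)) ↔ a = 1 := by
  simp only [doubleStar, SimpleGraph.fromRel_adj, ne_eq, Sum.inl.injEq, Sum.inr.injEq]
  constructor
  · rintro ⟨hne, h | h | h⟩ <;> simp_all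
  · rintro rfl; simp

lemma adj_rr (w w' : Fin k ⊕ Fin l) :
    ¬ (doubleStar k l).Adj (Sum.inr w) (Sum.inr w') := by
  simp only [doubleStar, SimpleGraph.fromRel_adj, ne_eq, Sum.inl.injEq, Sum.inr.injEq]
  rintro ⟨hne, h | h | h⟩ <;> simp_all

lemma adj_ul (i : Fin k) (a : Fin 2) :
    (doubleStar k l).Adj (Sum.inr (Sum.inl i)) (Sum.inl a) ↔ a = 0 := by
  rw [SimpleGraph.adj_comm]; exact adj_lu a i

lemma adj_vl (j : Fin l) (a : Fin 2) :
    (doubleStar k l).Adj (Sum.inr (Sum.inr j)) (Sum.inl a) ↔ a = 1 := by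
  rw [SimpleGraph.adj_comm]; exact adj_lv a j

end adj

lemma ds_mulVec (l : ℕ) (f : DSVertex 2 l → ℂ) :
    ((doubleStar 2 l).adjMatrix ℂ).mulVec f = Sum.elim
      (fun a : Fin 2 => if a = 0 then
          f (Sum.inl 1) + (f (Sum.inr (Sum.inl 0)) + f (Sum.inr (Sum.inl 1)))
        else f (Sum.inl 0) + ∑ j : Fin l, f (Sum.inr (Sum.inr j)))
      (Sum.elim (fun _ => f (Sum.inl 0)) (fun _ => f (Sum.inl 1))) := by
  funext x
  rw [Matrix.mulVec, dotProduct, Fintype.sum_sum_type, Fintype.sum_sum_type, Fin.sum_univ_two,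
    Fin.sum_univ_two]
  obtain (a | i | j) := x
  · fin_cases a
    · simp [SimpleGraph.adjMatrix_apply, adj_ll, adj_lu, adj_lv]
    · simp [SimpleGraph.adjMatrix_apply, adj_ll, adj_lu, adj_lv]
  · simp [SimpleGraph.adjMatrix_apply, adj_ul, adj_rr]
  · simp [SimpleGraph.adjMatrix_apply, adj_vl, adj_rr]

/-- A symmetric eigenvector of the double star for eigenvalue `θ`. -/
def evec (l : ℕ) (θ : ℂ) : DSVertex 2 l → ℂ :=
  Sum.elim (fun a => if a = 0 then θ else θ ^ 2 - 2)
    (Sum.elim (fun _ => 1) (fun _ => (θ ^ 2 - 2) / θ))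

/-- The antisymmetric `0`-eigenvector supported on the two pendant vertices at `u`. -/
def avec (l : ℕ) : DSVertex 2 l → ℂ :=
  Sum.elim 0 (Sum.elim (fun i => if i = 0 then 1 else -1) 0)

lemma adj_mulVec_evec (l : ℕ) (θ : ℂ) (hθ : θ ≠ 0)
    (heq : θ ^ 4 + 2 * l = (l + 3) * θ ^ 2) :
    ((doubleStar 2 l).adjMatrix ℂ).mulVec (evec l θ) = θ • evec l θ := by
  rw [ds_mulVec]
  funext x
  obtain (a | i | j) := x
  · fin_cases a
    · simp [evec]; ring
    · simp [evec, Finset.sum_const, Finset.card_univ, nsmul_eq_mul]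
      field_simp
      linear_combination -heq
  · simp [evec]
  · simp [evec]
    field_simp

lemma adj_mulVec_avec (l : ℕ) :
    ((doubleStar 2 l).adjMatrix ℂ).mulVec (avec l) = (0 : ℂ) • avec l := by
  rw [ds_mulVec]
  funext x
  obtain (a | i | j) := x
  · fin_cases a <;> simp [avec]
  · simp [avec]
  · simp [avec]

lemma e1_decomp (l : ℕ) (θ1 θ2 : ℂ) (h1 : θ1 ≠ 0) (h2 : θ2 ≠ 0)
    (hne : θ1 ^ 2 - θ2 ^ 2 ≠ 0) :
    (Pi.single (Sum.inr (Sum.inl 0)) 1 : DSVertex 2 l → ℂ) =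
      (1/2 : ℂ) • avec l
      + ((2 - θ2 ^ 2) / (4 * (θ1 ^ 2 - θ2 ^ 2))) • (evec l θ1 + evec l (-θ1))
      + ((θ1 ^ 2 - 2) / (4 * (θ1 ^ 2 - θ2 ^ 2))) • (evec l θ2 + evec l (-θ2)) := by
  funext x
  obtain (a | i | j) := x
  · fin_cases a <;>
      (simp [avec, evec, Pi.single_apply]; (try field_simp); (try ring))
  · fin_cases i <;>
      (simp [avec, evec, Pi.single_apply]; (try field_simp); (try ring))
  · simp [avec, evec, Pi.single_apply]
    (try field_simp); (try ring)

lemma e2_eq (l : ℕ) :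
    (Pi.single (Sum.inr (Sum.inl 1)) 1 : DSVertex 2 l → ℂ) =
      Pi.single (Sum.inr (Sum.inl 0)) 1 - avec l := by
  funext x
  obtain (a | i | j) := x
  · fin_cases a <;> simp [avec, Pi.single_apply]
  · fin_cases i <;> simp [avec, Pi.single_apply]
  · simp [avec, Pi.single_apply]

/-- The master formula for the walk applied to `e_{u₁}`. -/
lemma qWalk_e1 (l : ℕ) (θ1 θ2 : ℂ) (h1 : θ1 ≠ 0) (h2 : θ2 ≠ 0)
    (hne : θ1 ^ 2 - θ2 ^ 2 ≠ 0)
    (he1 : θ1 ^ 4 + 2 * l = (l + 3) * θ1 ^ 2) (he2 : θ2 ^ 4 + 2 * l = (l + 3) * θ2 ^ 2)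
    (t : ℝ) :
    (qWalk ((doubleStar 2 l).adjMatrix ℂ) t).mulVec (Pi.single (Sum.inr (Sum.inl 0)) 1) =
      (1/2 : ℂ) • avec l
      + ((2 - θ2 ^ 2) / (4 * (θ1 ^ 2 - θ2 ^ 2))) •
          (Complex.exp (Complex.I * t * θ1) • evec l θ1
            + Complex.exp (Complex.I * t * (-θ1)) • evec l (-θ1))
      + ((θ1 ^ 2 - 2) / (4 * (θ1 ^ 2 - θ2 ^ 2))) •
          (Complex.exp (Complex.I * t * θ2) • evec l θ2
            + Complex.exp (Complex.I * t * (-θ2)) • evec l (-θ2)) := by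
  have hne1 : (-θ1 : ℂ) ≠ 0 := neg_ne_zero.mpr h1
  have hne2 : (-θ2 : ℂ) ≠ 0 := neg_ne_zero.mpr h2
  have he1' : (-θ1) ^ 4 + 2 * l = (l + 3) * (-θ1) ^ 2 := by linear_combination he1
  have he2' : (-θ2) ^ 4 + 2 * l = (l + 3) * (-θ2) ^ 2 := by linear_combination he2
  rw [e1_decomp l θ1 θ2 h1 h2 hne]
  rw [Matrix.mulVec_add, Matrix.mulVec_add, Matrix.mulVec_smul, Matrix.mulVec_smul,
    Matrix.mulVec_smul, Matrix.mulVec_add, Matrix.mulVec_add,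
    qWalk_eigen _ _ _ (adj_mulVec_avec l) t,
    qWalk_eigen _ _ _ (adj_mulVec_evec l θ1 h1 he1) t,
    qWalk_eigen _ _ _ (adj_mulVec_evec l (-θ1) hne1 he1') t,
    qWalk_eigen _ _ _ (adj_mulVec_evec l θ2 h2 he2) t,
    qWalk_eigen _ _ _ (adj_mulVec_evec l (-θ2) hne2 he2') t]
  simp

lemma not_isSquare_aux (j : ℕ) (hj : j ≠ 1) : ¬ IsSquare (j ^ 2 + 8) := by
  rintro ⟨m, hm⟩
  rcases le_or_gt j 3 with h | h
  · interval_cases j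
    · have hm3 : m ≤ 3 := by nlinarith
      interval_cases m <;> omega
    · exact hj rfl
    · have hm3 : m ≤ 4 := by nlinarith
      interval_cases m <;> omega
    · have hm3 : m ≤ 5 := by nlinarith
      interval_cases m <;> omega
  · have h1 : j < m := by nlinarith
    have h2 : j + 1 ≤ m := h1
    nlinarith

lemma irrational_sqrtD (l : ℕ) (hl : 0 < l) (hne : l ≠ 2) :
    Irrational (Real.sqrt ((l : ℝ) ^ 2 - 2 * l + 9)) := by
  obtain ⟨j, rfl⟩ : ∃ j, l = j + 1 := ⟨l - 1, by omega⟩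
  have hcast : (((j + 1 : ℕ) : ℝ) ^ 2 - 2 * ((j + 1 : ℕ) : ℝ) + 9) = ((j ^ 2 + 8 : ℕ) : ℝ) := by
    push_cast; ring
  rw [hcast]
  exact irrational_sqrt_natCast_iff.mpr (not_isSquare_aux j (by omega))

lemma exists_odd_approx (α : ℝ) (hirr : Irrational α) (δ : ℝ) (hδ : 0 < δ) :
    ∃ m o : ℤ, Odd o ∧ |(2 * (m : ℝ) + 1) * α - o| < δ := by
  have hdense : Dense ((AddSubgroup.closure {2 * α, 2} : AddSubgroup ℝ) : Set ℝ) := by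
    rcases AddSubgroup.dense_or_cyclic (AddSubgroup.closure {2 * α, 2}) with h | ⟨a, ha⟩
    · exact h
    · exfalso
      have h1 : (2 * α) ∈ AddSubgroup.closure ({2 * α, 2} : Set ℝ) :=
        AddSubgroup.subset_closure (by simp)
      have h2 : (2 : ℝ) ∈ AddSubgroup.closure ({2 * α, 2} : Set ℝ) :=
        AddSubgroup.subset_closure (by simp)
      rw [ha, AddSubgroup.mem_closure_singleton] at h1 h2
      obtain ⟨m, hm⟩ := h1
      obtain ⟨n, hn⟩ := h2
      have hmr : (m : ℝ) * a = 2 * α := by simpa [zsmul_eq_mul] using hm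
      have hnr : (n : ℝ) * a = 2 := by simpa [zsmul_eq_mul] using hn
      have hn0 : n ≠ 0 := by
        rintro rfl
        norm_num at hnr
      have hn0' : ((n : ℚ) : ℝ) ≠ 0 := by
        simp only [Rat.cast_intCast, ne_eq, Int.cast_eq_zero]
        exact hn0
      have hq : α = (((m : ℚ) / (n : ℚ) : ℚ) : ℝ) := by
        push_cast
        rw [eq_div_iff (by exact_mod_cast hn0')]
        first
        | linear_combination ((n : ℝ) / 2) * hmr - ((m : ℝ) / 2) * hnr
        | linear_combination ((m : ℝ) / 2) * hnr - ((n : ℝ) / 2) * hmr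
      exact hirr ⟨_, hq.symm⟩
  obtain ⟨y, hy, hyd⟩ := hdense.exists_dist_lt (1 - α) hδ
  rw [SetLike.mem_coe, AddSubgroup.mem_closure_pair] at hy
  obtain ⟨m, n, rfl⟩ := hy
  refine ⟨m, 1 - 2 * n, ⟨-n, by ring⟩, ?_⟩
  have harg : (2 * (m : ℝ) + 1) * α - ((1 - 2 * n : ℤ) : ℝ)
      = (m • (2 * α) + n • (2 : ℝ)) - (1 - α) := by
    push_cast [zsmul_eq_mul]
    ring
  rw [harg, abs_sub_comm, ← Real.dist_eq]
  exact hyd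

lemma exists_good_time (θ1 θ2 : ℝ) (h1 : 0 < θ1) (hirr : Irrational (θ2 / θ1))
    (δ : ℝ) (hδ : 0 < δ) :
    ∃ t : ℝ, Complex.exp (Complex.I * t * θ1) = -1 ∧
      ‖Complex.exp (Complex.I * t * θ2) + 1‖ < δ := by
  set α := θ2 / θ1 with hα
  have hδ' : (0 : ℝ) < min (δ / 8) (1 / 4) := by positivity
  obtain ⟨m, o, ho, happ⟩ := exists_odd_approx α hirr _ hδ'
  set r : ℝ := (2 * (m : ℝ) + 1) * α - o with hr
  refine ⟨(2 * (m : ℝ) + 1) * Real.pi / θ1, ?_, ?_⟩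
  · have harg : Complex.I * ((2 * (m : ℝ) + 1) * Real.pi / θ1 : ℝ) * θ1
        = ((2 * m + 1 : ℤ) : ℂ) * (Real.pi * Complex.I) := by
      have hθ : (θ1 : ℂ) ≠ 0 := Complex.ofReal_ne_zero.mpr (ne_of_gt h1)
      push_cast
      field_simp
    rw [harg, Complex.exp_int_mul, Complex.exp_pi_mul_I]
    exact Odd.neg_one_zpow ⟨m, by ring⟩
  · have hθ : (θ1 : ℝ) ≠ 0 := ne_of_gt h1
    have h2 : ((2 * (m : ℝ) + 1) * Real.pi / θ1 * θ2 : ℝ) = ((o : ℝ) + r) * Real.pi := by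
      have ho' : ((o : ℝ) + r) = (2 * (m : ℝ) + 1) * α := by rw [hr]; ring
      rw [ho', hα]
      field_simp
    have h3 := congrArg (fun x : ℝ => (x : ℂ)) h2
    push_cast at h3
    have harg : Complex.I * ((2 * (m : ℝ) + 1) * Real.pi / θ1 : ℝ) * θ2
        = ((o : ℂ)) * (Real.pi * Complex.I) + ((r : ℝ) : ℂ) * (Real.pi * Complex.I) := by
      push_cast
      linear_combination Complex.I * h3
    rw [harg, Complex.exp_add, Complex.exp_int_mul, Complex.exp_pi_mul_I,
      Odd.neg_one_zpow ho]
    have hnorm : ‖-1 * Complex.exp ((r : ℂ) * (Real.pi * Complex.I)) + 1‖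
        = ‖Complex.exp ((r : ℂ) * (Real.pi * Complex.I)) - 1‖ := by
      rw [neg_one_mul, ← norm_neg]
      ring_nf
    rw [hnorm]
    have hrabs : |r| < min (δ / 8) (1 / 4) := happ
    have hzabs : ‖(r : ℂ) * (Real.pi * Complex.I)‖ = |r| * Real.pi := by
      simp [_root_.map_mul, Complex.norm_real, abs_of_pos Real.pi_pos]
    have hle1 : ‖(r : ℂ) * (Real.pi * Complex.I)‖ ≤ 1 := by
      rw [hzabs]
      have : |r| ≤ 1 / 4 := le_of_lt (lt_of_lt_of_le hrabs (min_le_right _ _))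
      nlinarith [Real.pi_le_four, Real.pi_pos]
    calc ‖Complex.exp ((r : ℂ) * (Real.pi * Complex.I)) - 1‖
        ≤ 2 * ‖(r : ℂ) * (Real.pi * Complex.I)‖ :=
          Complex.norm_exp_sub_one_le hle1
      _ = 2 * (|r| * Real.pi) := by rw [hzabs]
      _ ≤ 8 * |r| := by nlinarith [Real.pi_le_four, abs_nonneg r]
      _ < 8 * (δ / 8) := by
          have := lt_of_lt_of_le hrabs (min_le_left _ _)
          nlinarith
      _ = δ := by ring

lemma exp_IT_add_exp_IT_neg (t θ : ℝ) :
    Complex.exp (Complex.I * t * θ) + Complex.exp (Complex.I * t * (-(θ:ℂ)))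
      = ((2 * Real.cos (t * θ) : ℝ) : ℂ) := by
  have h1 : Complex.I * t * θ = ((t * θ : ℝ) : ℂ) * Complex.I := by push_cast; ring
  have h2 : Complex.I * t * (-(θ:ℂ)) = -(((t * θ : ℝ) : ℂ)) * Complex.I := by push_cast; ring
  rw [h1, h2, Complex.exp_mul_I, Complex.exp_mul_I, Complex.cos_neg, Complex.sin_neg]
  push_cast [Complex.ofReal_cos]
  ring

lemma norm_exp_IT_neg_add_one (t θ : ℝ) :
    ‖Complex.exp (Complex.I * t * (-(θ:ℂ))) + 1‖ = ‖Complex.exp (Complex.I * t * θ) + 1‖ := by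
  have key : Complex.exp (Complex.I * t * (-(θ:ℂ))) + 1
      = Complex.exp (Complex.I * t * (-(θ:ℂ))) * (1 + Complex.exp (Complex.I * t * θ)) := by
    rw [mul_add, mul_one, ← Complex.exp_add]
    have : Complex.I * t * (-(θ:ℂ)) + Complex.I * t * θ = 0 := by ring
    rw [this, Complex.exp_zero]
  rw [key, norm_mul]
  have h1 : ‖Complex.exp (Complex.I * t * (-(θ:ℂ)))‖ = 1 := by
    rw [Complex.norm_exp]
    have : (Complex.I * t * (-(θ:ℂ))).re = 0 := by simp
    rw [this, Real.exp_zero]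
  rw [h1, one_mul, add_comm]

set_option maxHeartbeats 2000000 in
set_option synthInstance.maxHeartbeats 400000 in
/-- in `S_{2,ℓ}` there is pretty good state transfer between the two pendant
vertices adjacent to the centre of degree three if and only if `ℓ ≠ 2`. -/
theorem pgst_S2l_iff (l : ℕ) (hl : 0 < l) :
    IsPGST ((doubleStar 2 l).adjMatrix ℂ)
        (Sum.inr (Sum.inl 0)) (Sum.inr (Sum.inl 1)) ↔ l ≠ 2 := by
  constructor
  · rintro ⟨γ, hγ, hfin⟩ rfl
    obtain ⟨t, ht⟩ := hfin (1/4) (by norm_num)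
    have hw := qWalk_e1 2 2 1 (by norm_num) (by norm_num) (by norm_num)
      (by push_cast; norm_num) (by push_cast; norm_num) t
    have hval : (qWalk ((doubleStar 2 2).adjMatrix ℂ) t).mulVec
        (Pi.single (Sum.inr (Sum.inl 0)) 1) (Sum.inr (Sum.inl 1))
        = ((-1/2 + 1/6 * Real.cos (t * 2) + 1/3 * Real.cos (t * 1) : ℝ) : ℂ) := by
      rw [congrFun hw (Sum.inr (Sum.inl 1))]
      simp only [Pi.add_apply, Pi.smul_apply, smul_eq_mul, evec, avec, Sum.elim_inr,
        Sum.elim_inl]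
      have c2 := exp_IT_add_exp_IT_neg t 2
      have c1 := exp_IT_add_exp_IT_neg t 1
      push_cast at c1 c2 ⊢
      linear_combination (1/12 : ℂ) * c2 + (1/6 : ℂ) * c1
    set x : ℝ := -1/2 + 1/6 * Real.cos (t * 2) + 1/3 * Real.cos (t * 1) with hx
    have hxle : |x| ≤ 3/4 := by
      have hcos2 : Real.cos (t * 2) = 2 * Real.cos t ^ 2 - 1 := by
        rw [mul_comm, Real.cos_two_mul]
      rw [hx, hcos2, mul_one, abs_le]
      constructor <;>
        nlinarith [Real.neg_one_le_cos t, Real.cos_le_one t,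
          sq_nonneg (Real.cos t + 1/2), sq_nonneg (Real.cos t - 1)]
    have hc := norm_le_pi_norm
      ((qWalk ((doubleStar 2 2).adjMatrix ℂ) t).mulVec (Pi.single (Sum.inr (Sum.inl 0)) 1)
        - γ • (Pi.single (Sum.inr (Sum.inl 1)) 1 : DSVertex 2 2 → ℂ)) (Sum.inr (Sum.inl 1))
    simp only [Pi.sub_apply, Pi.smul_apply, Pi.single_eq_same, smul_eq_mul, mul_one] at hc
    rw [hval] at hc
    have hxnorm : ‖((x : ℝ) : ℂ)‖ = |x| := by
      rw [Complex.norm_real, Real.norm_eq_abs]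
    have hlow : (1/4 : ℝ) ≤ ‖((x : ℝ) : ℂ) - γ‖ := by
      have h1 : ‖γ‖ - ‖((x : ℝ) : ℂ)‖ ≤ ‖((x : ℝ) : ℂ) - γ‖ := by
        rw [norm_sub_rev]
        exact norm_sub_norm_le _ _
      rw [hγ, hxnorm] at h1
      linarith
    linarith [lt_of_le_of_lt hc ht]
  · intro hne
    have hl1 : (1 : ℝ) ≤ l := by exact_mod_cast hl
    have hD0 : (0 : ℝ) < (l : ℝ) ^ 2 - 2 * l + 9 := by nlinarith [sq_nonneg ((l : ℝ) - 1)]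
    obtain ⟨d, hddef⟩ : ∃ x : ℝ, x = Real.sqrt ((l : ℝ) ^ 2 - 2 * l + 9) := ⟨_, rfl⟩
    have hd2 : d ^ 2 = (l : ℝ) ^ 2 - 2 * l + 9 := by rw [hddef]; exact Real.sq_sqrt hD0.le
    have hdpos : 0 < d := by rw [hddef]; exact Real.sqrt_pos.mpr hD0
    have hdlt : d < (l : ℝ) + 3 := by
      rw [hddef]
      rw [show ((l : ℝ) ^ 2 - 2 * l + 9) = ((l : ℝ) + 3) ^ 2 - 8 * l by ring]
      apply (Real.sqrt_lt' (by positivity)).mpr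
      nlinarith
    obtain ⟨r1, hr1def⟩ : ∃ x : ℝ, x = (((l : ℝ) + 3) + d) / 2 := ⟨_, rfl⟩
    obtain ⟨r2, hr2def⟩ : ∃ x : ℝ, x = (((l : ℝ) + 3) - d) / 2 := ⟨_, rfl⟩
    have hr1pos : 0 < r1 := by rw [hr1def]; linarith
    have hr2pos : 0 < r2 := by rw [hr2def]; linarith
    obtain ⟨t1, ht1def⟩ : ∃ x : ℝ, x = Real.sqrt r1 := ⟨_, rfl⟩
    obtain ⟨t2, ht2def⟩ : ∃ x : ℝ, x = Real.sqrt r2 := ⟨_, rfl⟩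
    have ht1sq : t1 ^ 2 = r1 := by rw [ht1def]; exact Real.sq_sqrt hr1pos.le
    have ht2sq : t2 ^ 2 = r2 := by rw [ht2def]; exact Real.sq_sqrt hr2pos.le
    have ht1pos : 0 < t1 := by rw [ht1def]; exact Real.sqrt_pos.mpr hr1pos
    have ht2pos : 0 < t2 := by rw [ht2def]; exact Real.sqrt_pos.mpr hr2pos
    have hchar1 : t1 ^ 4 + 2 * (l : ℝ) = ((l : ℝ) + 3) * t1 ^ 2 := by
      have h4 : t1 ^ 4 = r1 ^ 2 := by rw [← ht1sq]; ring
      rw [h4, ht1sq, hr1def]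
      nlinarith [hd2]
    have hchar2 : t2 ^ 4 + 2 * (l : ℝ) = ((l : ℝ) + 3) * t2 ^ 2 := by
      have h4 : t2 ^ 4 = r2 ^ 2 := by rw [← ht2sq]; ring
      rw [h4, ht2sq, hr2def]
      nlinarith [hd2]
    have hsqne : t1 ^ 2 - t2 ^ 2 ≠ 0 := by
      rw [ht1sq, ht2sq, hr1def, hr2def]
      have : (((l : ℝ) + 3) + d) / 2 - (((l : ℝ) + 3) - d) / 2 = d := by ring
      rw [this]
      exact ne_of_gt hdpos
    have hirr : Irrational (t2 / t1) := by
      rintro ⟨q, hq⟩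
      apply irrational_sqrtD l hl hne
      have hq1 : (0 : ℝ) < 1 + (q : ℝ) ^ 2 := by positivity
      have ht2q : t2 = (q : ℝ) * t1 := by
        rw [eq_div_iff (ne_of_gt ht1pos)] at hq
        exact hq.symm
      have hr2q : r2 = (q : ℝ) ^ 2 * r1 := by rw [← ht2sq, ← ht1sq, ht2q]; ring
      have hsum : r1 * (1 + (q : ℝ) ^ 2) = (l : ℝ) + 3 := by
        rw [hr1def]
        rw [hr1def, hr2def] at hr2q
        first
        | linear_combination hr2q
        | linear_combination -hr2q
      have hd_eq : d = r1 - r2 := by rw [hr1def, hr2def]; ring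
      refine ⟨((l : ℚ) + 3) * (1 - q ^ 2) / (1 + q ^ 2), ?_⟩
      rw [← hddef]
      push_cast
      rw [div_eq_iff (ne_of_gt hq1)]
      linear_combination ((q : ℝ) ^ 2 - 1) * hsum + (1 + (q : ℝ) ^ 2) * hr2q
        - (1 + (q : ℝ) ^ 2) * hd_eq
    have h1c : ((t1 : ℂ)) ≠ 0 := Complex.ofReal_ne_zero.mpr (ne_of_gt ht1pos)
    have h2c : ((t2 : ℂ)) ≠ 0 := Complex.ofReal_ne_zero.mpr (ne_of_gt ht2pos)
    have hsqnec : ((t1 : ℂ)) ^ 2 - ((t2 : ℂ)) ^ 2 ≠ 0 := by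
      intro h
      apply hsqne
      exact_mod_cast h
    have hc1 : ((t1 : ℂ)) ^ 4 + 2 * (l : ℕ) = ((l : ℕ) + 3) * ((t1 : ℂ)) ^ 2 := by
      exact_mod_cast hchar1
    have hc2 : ((t2 : ℂ)) ^ 4 + 2 * (l : ℕ) = ((l : ℕ) + 3) * ((t2 : ℂ)) ^ 2 := by
      exact_mod_cast hchar2
    refine ⟨-1, by simp, ?_⟩
    intro ε hε
    obtain ⟨α2, hα2⟩ : ∃ x : ℂ,
        x = (((t1 : ℂ)) ^ 2 - 2) / (4 * (((t1 : ℂ)) ^ 2 - ((t2 : ℂ)) ^ 2)) := ⟨_, rfl⟩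
    obtain ⟨C, hC⟩ : ∃ x : ℝ,
        x = ‖α2‖ * (‖evec l ((t2 : ℂ))‖ + ‖evec l (-(t2 : ℂ))‖) := ⟨_, rfl⟩
    have hC0 : 0 ≤ C := by rw [hC]; positivity
    have hδpos : 0 < ε / (C + 1) := by positivity
    obtain ⟨t, hz1, hz2⟩ := exists_good_time t1 t2 ht1pos hirr (ε / (C + 1)) hδpos
    refine ⟨t, ?_⟩
    have hw := qWalk_e1 l ((t1 : ℂ)) ((t2 : ℂ)) h1c h2c hsqnec hc1 hc2 t
    have hz1' : Complex.exp (Complex.I * t * (-(t1 : ℂ))) + 1 = 0 := by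
      have h := norm_exp_IT_neg_add_one t t1
      rw [hz1, show (-1 : ℂ) + 1 = 0 by ring, norm_zero] at h
      exact norm_eq_zero.mp h
    have hz1'' : Complex.exp (Complex.I * t * ((t1 : ℂ))) + 1 = 0 := by
      rw [hz1]; ring
    have hz2' : ‖Complex.exp (Complex.I * t * (-(t2 : ℂ))) + 1‖ < ε / (C + 1) := by
      rw [norm_exp_IT_neg_add_one t t2]
      exact hz2
    have hkey : (qWalk ((doubleStar 2 l).adjMatrix ℂ) t).mulVec
          (Pi.single (Sum.inr (Sum.inl 0)) 1)
        - (-1 : ℂ) • (Pi.single (Sum.inr (Sum.inl 1)) 1 : DSVertex 2 l → ℂ)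
        = ((2 - ((t2 : ℂ)) ^ 2) / (4 * (((t1 : ℂ)) ^ 2 - ((t2 : ℂ)) ^ 2))) •
            ((Complex.exp (Complex.I * t * ((t1 : ℂ))) + 1) • evec l ((t1 : ℂ))
              + (Complex.exp (Complex.I * t * (-(t1 : ℂ))) + 1) • evec l (-(t1 : ℂ)))
          + α2 •
            ((Complex.exp (Complex.I * t * ((t2 : ℂ))) + 1) • evec l ((t2 : ℂ))
              + (Complex.exp (Complex.I * t * (-(t2 : ℂ))) + 1) • evec l (-(t2 : ℂ))) := by
      rw [hw, e2_eq l, e1_decomp l ((t1 : ℂ)) ((t2 : ℂ)) h1c h2c hsqnec, hα2]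
      module
    rw [hkey, hz1', hz1'']
    simp only [zero_smul, smul_zero, add_zero, zero_add]
    calc ‖α2 • ((Complex.exp (Complex.I * t * ((t2 : ℂ))) + 1) • evec l ((t2 : ℂ))
              + (Complex.exp (Complex.I * t * (-(t2 : ℂ))) + 1) • evec l (-(t2 : ℂ)))‖
        ≤ ‖α2‖ * (‖(Complex.exp (Complex.I * t * ((t2 : ℂ))) + 1) • evec l ((t2 : ℂ))‖
            + ‖(Complex.exp (Complex.I * t * (-(t2 : ℂ))) + 1) • evec l (-(t2 : ℂ))‖) := by
          rw [norm_smul]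
          exact mul_le_mul_of_nonneg_left (norm_add_le _ _) (norm_nonneg _)
      _ ≤ ‖α2‖ * ((ε / (C + 1)) * ‖evec l ((t2 : ℂ))‖
            + (ε / (C + 1)) * ‖evec l (-(t2 : ℂ))‖) := by
          have b1 : ‖(Complex.exp (Complex.I * t * ((t2 : ℂ))) + 1) • evec l ((t2 : ℂ))‖
              ≤ (ε / (C + 1)) * ‖evec l ((t2 : ℂ))‖ := by
            rw [norm_smul]
            exact mul_le_mul_of_nonneg_right (le_of_lt hz2) (norm_nonneg _)
          have b2 : ‖(Complex.exp (Complex.I * t * (-(t2 : ℂ))) + 1) • evec l (-(t2 : ℂ))‖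
              ≤ (ε / (C + 1)) * ‖evec l (-(t2 : ℂ))‖ := by
            rw [norm_smul]
            exact mul_le_mul_of_nonneg_right (le_of_lt hz2') (norm_nonneg _)
          exact mul_le_mul_of_nonneg_left (add_le_add b1 b2) (norm_nonneg _)
      _ = (ε / (C + 1)) * C := by rw [hC]; ring
      _ < ε := by
          rw [div_mul_eq_mul_div, mul_comm]
          rw [div_lt_iff₀ (by positivity)]
          nlinarith
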